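/- Let K and T be positive integers. Then the set of real numbers α with 1/2 < α < 1 for which the FOFE encoding map over a vocabulary of size K fails to be injective on the set of sequences of length at most T is a finite set. (Theorem 2 of the paper: FOFE is unique for all α in (0.5, 1.0) except a finite set of isolated values of α.) -/

import Mathlib

/-- The FOFE code of a word sequence `w = (w_1, …, w_T)` over the vocabulary `Fin K`
with forgetting factor `α`: `z_0 = 0`, `z_t = α • z_{t-1} + e_{w_t}`. -/
def fofe {K : ℕ} (α : ℝ) (w : List (Fin K)) : Fin K → ℝ :=
  w.foldl (fun z a => α • z + Pi.single a (1 : ℝ)) 0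

noncomputable def qf {K : ℕ} (w : List (Fin K)) (j : Fin K) : Polynomial ℝ :=
  ∑ t ∈ Finset.range w.length, if w.reverse[t]? = some j then Polynomial.X ^ t else 0

lemma fofe_eval {K : ℕ} (α : ℝ) (w : List (Fin K)) (j : Fin K) :
    fofe α w j = (qf w j).eval α := by
  induction w using List.reverseRecOn with
  | nil => simp [fofe, qf]
  | append_singleton w a ih =>
    have h1 : fofe α (w ++ [a]) = α • fofe α w + Pi.single a 1 := by
      simp [fofe, List.foldl_append]
    have h2 : qf (w ++ [a]) j = (if a = j then 1 else 0) + Polynomial.X * qf w j := by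
      unfold qf
      rw [List.length_append]
      simp only [List.reverse_append, List.reverse_singleton, List.singleton_append,
        List.length_singleton]
      rw [Finset.sum_range_succ', add_comm]
      congr 1
      · simp
      · rw [Finset.mul_sum]
        refine Finset.sum_congr rfl fun t _ => ?_
        simp only [List.getElem?_cons_succ, pow_succ]
        rw [mul_ite, mul_zero]
        split
        · ring
        · rfl
    rw [h1, h2]
    simp only [Pi.add_apply, Pi.smul_apply, smul_eq_mul, Polynomial.eval_add,
      Polynomial.eval_mul, Polynomial.eval_X, apply_ite (Polynomial.eval α),
      Polynomial.eval_one, Polynomial.eval_zero, Pi.single_apply, ih]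
    rw [add_comm]
    congr 1
    simp [eq_comm]

lemma qf_coeff {K : ℕ} (w : List (Fin K)) (j : Fin K) (n : ℕ) :
    (qf w j).coeff n = if w.reverse[n]? = some j then 1 else 0 := by
  unfold qf
  rw [Polynomial.finset_sum_coeff]
  have h : ∀ t, (if w.reverse[t]? = some j then (Polynomial.X : Polynomial ℝ) ^ t else 0).coeff n
      = if t = n then (if w.reverse[n]? = some j then 1 else 0) else 0 := by
    intro t
    rcases eq_or_ne t n with rfl | hne
    · split <;> simp [Polynomial.coeff_X_pow]
    · split <;> simp [Polynomial.coeff_X_pow, hne, Ne.symm hne]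
  rw [Finset.sum_congr rfl (fun t _ => h t), Finset.sum_ite_eq' (Finset.range w.length) n]
  rcases lt_or_ge n w.length with hn | hn
  · rw [if_pos (Finset.mem_range.mpr hn)]
  · rw [if_neg (by simpa using Nat.not_lt.mpr hn)]
    rw [List.getElem?_eq_none_iff.mpr (by simpa using hn)]
    simp

lemma qf_inj {K : ℕ} (w w' : List (Fin K)) (h : ∀ j, qf w j = qf w' j) : w = w' := by
  have key : ∀ n : ℕ, w.reverse[n]? = w'.reverse[n]? := by
    intro n
    have hc : ∀ j : Fin K, (if w.reverse[n]? = some j then (1:ℝ) else 0)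
        = (if w'.reverse[n]? = some j then 1 else 0) := fun j => by
      rw [← qf_coeff, ← qf_coeff, h j]
    cases hw : w.reverse[n]? with
    | none =>
      cases hw' : w'.reverse[n]? with
      | none => rfl
      | some j => have := hc j; rw [hw, hw'] at this; simp at this
    | some j =>
      cases hw' : w'.reverse[n]? with
      | none => have := hc j; rw [hw, hw'] at this; simp at this
      | some j' =>
        have := hc j
        rw [hw, hw'] at this
        rw [if_pos rfl] at this
        by_contra hne
        rw [if_neg (fun hh => hne hh.symm)] at this
        norm_num at this
  have : w.reverse = w'.reverse := List.ext_getElem?_iff.mpr key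
  simpa using congrArg List.reverse this

/-- **Theorem 2.** For positive `K` and `T`, the set of `α ∈ (1/2, 1)` at which the
FOFE encoding fails to be injective on sequences of length at most `T` is finite. -/
theorem fofe_bad_alphas_finite (K T : ℕ) (hK : 0 < K) (hT : 0 < T) :
    {α : ℝ | 1 / 2 < α ∧ α < 1 ∧
      ∃ w w' : List (Fin K), w.length ≤ T ∧ w'.length ≤ T ∧
        fofe α w = fofe α w' ∧ w ≠ w'}.Finite := by
  have hS : ({p : List (Fin K) × List (Fin K) | p.1.length ≤ T ∧ p.2.length ≤ T}).Finite := by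
    have h1 := List.finite_length_le (Fin K) T
    exact (h1.prod h1).subset (fun p hp => ⟨hp.1, hp.2⟩)
  have hZ : ∀ p : List (Fin K) × List (Fin K),
      ({α : ℝ | fofe α p.1 = fofe α p.2 ∧ p.1 ≠ p.2}).Finite := by
    rintro ⟨w, w'⟩
    rcases eq_or_ne w w' with rfl | hne
    · simp
    · obtain ⟨j, hj⟩ : ∃ j, qf w j ≠ qf w' j := by
        by_contra hcon
        push_neg at hcon
        exact hne (qf_inj w w' hcon)
      apply (Polynomial.finite_setOf_isRoot (p := qf w j - qf w' j) (sub_ne_zero.mpr hj)).subset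
      rintro α ⟨hα, -⟩
      have := congrFun hα j
      simp only [Polynomial.IsRoot, Polynomial.eval_sub, Set.mem_setOf_eq]
      rw [← fofe_eval, ← fofe_eval, this, sub_self]
  apply (hS.biUnion (fun p _ => hZ p)).subset
  rintro α ⟨-, -, w, w', hw, hw', heq, hne⟩
  exact Set.mem_biUnion (show (w, w') ∈ _ from ⟨hw, hw'⟩) ⟨heq, hne⟩
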